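/- For S = ⟨20, 28, 42, 73⟩, the element 202 has length set {4, 6, 7, 9}, and LD(202) = 3/5 is strictly smaller than LD(b) for every Betti element b of S (whose length sets are L(84) = {2,3}, L(140) = {4,5,7}, L(146) = {2,4,5}). -/

import Mathlib

open Finset

namespace LengthDensity

/-- The set of factorizations of `n` with respect to generators `g`. -/
def facs {k : ℕ} (g : Fin k → ℕ) (n : ℕ) : Set (Fin k → ℕ) :=
  {z | ∑ i, z i * g i = n}

/-- Membership in the numerical semigroup generated by `g`. -/
def mem {k : ℕ} (g : Fin k → ℕ) (n : ℕ) : Prop := (facs g n).Nonempty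

/-- The set of factorization lengths of `n`. -/
def lengthSet {k : ℕ} (g : Fin k → ℕ) (n : ℕ) : Set ℕ :=
  (fun z => ∑ i, z i) '' facs g n

/-- Length density of an element. -/
noncomputable def LD {k : ℕ} (g : Fin k → ℕ) (n : ℕ) : ℝ :=
  (((lengthSet g n).ncard : ℝ) - 1) /
    (((sSup (lengthSet g n) : ℕ) : ℝ) - ((sInf (lengthSet g n) : ℕ) : ℝ))

/-- Length density of the semigroup: infimum of `LD` over elements with
non-singleton length set. -/
noncomputable def LDsgp {k : ℕ} (g : Fin k → ℕ) : ℝ :=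
  sInf {x : ℝ | ∃ n : ℕ, 2 ≤ (lengthSet g n).ncard ∧ x = LD g n}

/-- The delta set (successive gaps) of a set of naturals. -/
def deltaOf (L : Set ℕ) : Set ℕ :=
  {d | ∃ a ∈ L, ∃ b ∈ L, a < b ∧ (∀ c ∈ L, ¬(a < c ∧ c < b)) ∧ d = b - a}

/-- The delta set of an element. -/
def delta {k : ℕ} (g : Fin k → ℕ) (n : ℕ) : Set ℕ := deltaOf (lengthSet g n)

/-- The delta set of the semigroup. -/
def Delta {k : ℕ} (g : Fin k → ℕ) : Set ℕ := ⋃ n : ℕ, delta g n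

/-- Adjacency in the factorization graph of `n`: two factorizations of `n`
sharing a positive coordinate. -/
def adj {k : ℕ} (g : Fin k → ℕ) (n : ℕ) (z z' : Fin k → ℕ) : Prop :=
  z ∈ facs g n ∧ z' ∈ facs g n ∧ ∃ i, 0 < z i ∧ 0 < z' i

/-- `n` is a Betti element: its factorization graph is disconnected. -/
def IsBetti {k : ℕ} (g : Fin k → ℕ) (n : ℕ) : Prop :=
  ∃ z ∈ facs g n, ∃ z' ∈ facs g n, ¬ Relation.ReflTransGen (adj g n) z z'

/-- The semigroup is tasty: `LD(S) > 1 / max Δ(S)`. -/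
def Tasty {k : ℕ} (g : Fin k → ℕ) : Prop := LDsgp g > 1 / ((sSup (Delta g) : ℕ) : ℝ)

/-- The semigroup is bland: `LD(S) = 1 / max Δ(S)`. -/
def Bland {k : ℕ} (g : Fin k → ℕ) : Prop := LDsgp g = 1 / ((sSup (Delta g) : ℕ) : ℝ)

/-- `g` is a minimal generating set: no generator is a nonnegative integer
combination of the others. -/
def IsMinGen {k : ℕ} (g : Fin k → ℕ) : Prop :=
  ∀ i, ¬ ∃ z : Fin k → ℕ, z i = 0 ∧ ∑ j, z j * g j = g i

/-- `n` is a non-atom of the semigroup generated by `g`: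
it is a sum of two nonzero elements. -/
def NonAtom {k : ℕ} (g : Fin k → ℕ) (n : ℕ) : Prop :=
  ∃ a b : ℕ, 0 < a ∧ 0 < b ∧ mem g a ∧ mem g b ∧ n = a + b

/-! ### Auxiliary machinery -/

def quads (n : ℕ) : List (ℕ × ℕ × ℕ × ℕ) :=
  (List.range (n/20+1)).flatMap fun a =>
  (List.range ((n-20*a)/28+1)).flatMap fun b =>
  (List.range ((n-20*a-28*b)/42+1)).filterMap fun c =>
    let r := n - 20*a - 28*b - 42*c
    if 73*(r/73) = r then some (a,b,c,r/73) else none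

lemma quads_iff {n : ℕ} {q : ℕ × ℕ × ℕ × ℕ} :
    q ∈ quads n ↔ 20*q.1 + 28*q.2.1 + 42*q.2.2.1 + 73*q.2.2.2 = n := by
  obtain ⟨a,b,c,d⟩ := q
  simp only [quads, List.mem_flatMap, List.mem_filterMap, List.mem_range, Nat.lt_succ_iff]
  constructor
  · rintro ⟨a', ha, b', hb, c', hc, hcond⟩
    split at hcond
    · next heq =>
      simp only [Option.some.injEq, Prod.mk.injEq] at hcond
      obtain ⟨h1', h2', h3', h4'⟩ := hcond
      subst h1'; subst h2'; subst h3'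
      have h1 : a' * 20 ≤ n := (Nat.le_div_iff_mul_le (by norm_num)).mp ha
      have h2 : b' * 28 ≤ n - 20*a' := (Nat.le_div_iff_mul_le (by norm_num)).mp hb
      have h3 : c' * 42 ≤ n - 20*a' - 28*b' := (Nat.le_div_iff_mul_le (by norm_num)).mp hc
      omega
    · exact absurd hcond (by simp)
  · intro h
    refine ⟨a, (Nat.le_div_iff_mul_le (by norm_num)).mpr (by omega),
            b, (Nat.le_div_iff_mul_le (by norm_num)).mpr (by omega),
            c, (Nat.le_div_iff_mul_le (by norm_num)).mpr (by omega), ?_⟩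
    have hr : n - 20*a - 28*b - 42*c = 73*d := by omega
    rw [hr, Nat.mul_div_cancel_left d (by norm_num)]
    simp

lemma facs_iff {z : Fin 4 → ℕ} {n : ℕ} :
    z ∈ facs ![20, 28, 42, 73] n ↔ 20*(z 0) + 28*(z 1) + 42*(z 2) + 73*(z 3) = n := by
  simp [facs, Fin.sum_univ_four]
  constructor <;> (intro h; omega)

lemma mem_quads_of_facs {z : Fin 4 → ℕ} {n : ℕ} (h : z ∈ facs ![20, 28, 42, 73] n) :
    (z 0, z 1, z 2, z 3) ∈ quads n := quads_iff.mpr (facs_iff.mp h)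

lemma vec_facs_of_quads {a b c d n : ℕ} (h : (a,b,c,d) ∈ quads n) :
    ![a,b,c,d] ∈ facs ![20, 28, 42, 73] n := by
  have := quads_iff.mp h
  rw [facs_iff]
  simpa using this

lemma eq_vec {z : Fin 4 → ℕ} {a b c d : ℕ} (h : (z 0, z 1, z 2, z 3) = (a,b,c,d)) :
    z = ![a,b,c,d] := by
  simp only [Prod.mk.injEq] at h
  funext i
  fin_cases i <;> simp [h.1, h.2.1, h.2.2.1, h.2.2.2]

lemma adj_symm {k n} {g : Fin k → ℕ} {z z' : Fin k → ℕ} (h : adj g n z z') : adj g n z' z := by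
  obtain ⟨h1, h2, i, hi1, hi2⟩ := h
  exact ⟨h2, h1, i, hi2, hi1⟩

lemma mem_add20 {m : ℕ} (h : mem ![20, 28, 42, 73] m) : mem ![20, 28, 42, 73] (m + 20) := by
  obtain ⟨z, hz⟩ := h
  refine ⟨![z 0 + 1, z 1, z 2, z 3], ?_⟩
  rw [facs_iff] at hz ⊢
  simp only [Matrix.cons_val_zero, Matrix.cons_val_one, Matrix.head_cons,
    Matrix.cons_val_two, Matrix.tail_cons, Matrix.cons_val_three]
  omega

lemma mem_add20mul {m : ℕ} (h : mem ![20, 28, 42, 73] m) (q : ℕ) :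
    mem ![20, 28, 42, 73] (m + 20*q) := by
  induction q with
  | zero => simpa using h
  | succ t ih =>
    have h2 : m + 20*(t+1) = m + 20*t + 20 := by ring
    rw [h2]; exact mem_add20 ih

lemma large_conn {n : ℕ} (hn : 354 ≤ n)
    (hmem : ∀ m, 208 ≤ m → mem ![20, 28, 42, 73] m)
    {z z' : Fin 4 → ℕ} (hz : z ∈ facs ![20, 28, 42, 73] n) (hz' : z' ∈ facs ![20, 28, 42, 73] n) :
    Relation.ReflTransGen (adj ![20, 28, 42, 73] n) z z' := by
  set g : Fin 4 → ℕ := ![20, 28, 42, 73] with hg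
  have hiz : ∃ i, 0 < z i := by
    have := facs_iff.mp hz
    by_contra hc
    push_neg at hc
    simp only [Nat.le_zero] at hc
    rw [hc 0, hc 1, hc 2, hc 3] at this
    omega
  have hjz : ∃ j, 0 < z' j := by
    have := facs_iff.mp hz'
    by_contra hc
    push_neg at hc
    simp only [Nat.le_zero] at hc
    rw [hc 0, hc 1, hc 2, hc 3] at this
    omega
  obtain ⟨i, hi⟩ := hiz
  obtain ⟨j, hj⟩ := hjz
  have hgle : ∀ t : Fin 4, g t ≤ 73 := by intro t; fin_cases t <;> simp [hg]
  have hm : 208 ≤ n - g i - g j := by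
    have := hgle i; have := hgle j; omega
  obtain ⟨w, hw⟩ := hmem _ hm
  set W : Fin 4 → ℕ := fun t => w t + (if t = i then 1 else 0) + (if t = j then 1 else 0) with hW
  have hWfac : W ∈ facs g n := by
    have hweq : ∑ t, w t * g t = n - g i - g j := hw
    have hsum : ∑ t, W t * g t = (∑ t, w t * g t) + g i + g j := by
      simp only [hW, add_mul, Finset.sum_add_distrib, ite_mul, one_mul, zero_mul]
      rw [Finset.sum_ite_eq' Finset.univ i g, Finset.sum_ite_eq' Finset.univ j g]
      simp
    show ∑ t, W t * g t = n
    rw [hsum, hweq]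
    have := hgle i; have := hgle j
    omega
  have hWi : 0 < W i := by simp [hW]
  have hWj : 0 < W j := by simp [hW]
  exact Relation.ReflTransGen.trans
    (Relation.ReflTransGen.single ⟨hz, hWfac, i, hi, hWi⟩)
    (Relation.ReflTransGen.single ⟨hWfac, hz', j, hWj, hj⟩)

lemma reach_eq {k n} {g : Fin k → ℕ} {w : Fin k → ℕ}
    (hiso : ∀ u ∈ facs g n, (∃ i, 0 < w i ∧ 0 < u i) → u = w) :
    ∀ v, Relation.ReflTransGen (adj g n) w v → v = w := by
  intro v h
  induction h with
  | refl => rfl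
  | tail h1 h2 ih =>
    rename_i b c
    rw [ih] at h2
    obtain ⟨_, hc, i, hwi, hci⟩ := h2
    exact hiso c hc ⟨i, hwi, hci⟩

def share (z w : ℕ × ℕ × ℕ × ℕ) : Bool :=
  (0 < z.1 && 0 < w.1) || (0 < z.2.1 && 0 < w.2.1) || (0 < z.2.2.1 && 0 < w.2.2.1)
    || (0 < z.2.2.2 && 0 < w.2.2.2)

def hub (n : ℕ) : Bool :=
  (quads n).any fun w => (quads n).all fun z => share z w

lemma mem_of_quads_ne {n : ℕ} (h : quads n ≠ []) : mem ![20, 28, 42, 73] n := by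
  match hq : quads n with
  | [] => exact absurd hq h
  | q :: l =>
    obtain ⟨a,b,c,d⟩ := q
    exact ⟨![a,b,c,d], vec_facs_of_quads (hq ▸ List.mem_cons_self)⟩

lemma mem_of_208 : ∀ m, 208 ≤ m → mem ![20, 28, 42, 73] m := by
  have base : ∀ s ∈ List.range 20, quads (208+s) ≠ [] := by decide
  intro m hm
  have heq : m = (208 + (m-208) % 20) + 20*((m-208)/20) := by omega
  rw [heq]
  exact mem_add20mul (mem_of_quads_ne (base _ (List.mem_range.mpr (by omega)))) _

lemma conn_of_hub {n : ℕ} (h : hub n = true) {z z' : Fin 4 → ℕ}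
    (hz : z ∈ facs ![20, 28, 42, 73] n) (hz' : z' ∈ facs ![20, 28, 42, 73] n) :
    Relation.ReflTransGen (adj ![20, 28, 42, 73] n) z z' := by
  obtain ⟨w, hwq, hall⟩ := List.any_eq_true.mp h
  obtain ⟨a,b,c,d⟩ := w
  have hW : ![a,b,c,d] ∈ facs ![20, 28, 42, 73] n := vec_facs_of_quads hwq
  have step : ∀ u ∈ facs ![20, 28, 42, 73] n, adj ![20, 28, 42, 73] n u ![a,b,c,d] := by
    intro u hu
    have hs := List.all_eq_true.mp hall _ (mem_quads_of_facs hu)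
    refine ⟨hu, hW, ?_⟩
    simp only [share, Bool.or_eq_true, Bool.and_eq_true, decide_eq_true_eq] at hs
    rcases hs with ((⟨h1,h2⟩ | ⟨h1,h2⟩) | ⟨h1,h2⟩) | ⟨h1,h2⟩
    exacts [⟨0, h1, by simpa using h2⟩, ⟨1, h1, by simpa using h2⟩,
            ⟨2, h1, by simpa using h2⟩, ⟨3, h1, by simpa using h2⟩]
  exact (Relation.ReflTransGen.single (step z hz)).trans
    (Relation.ReflTransGen.single (adj_symm (step z' hz')))

lemma smallcheck : ∀ n ∈ List.range 354,
    (n = 0 ∨ n = 84 ∨ n = 140 ∨ n = 146) ∨ hub n = true ∨ quads n = [] := by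
  set_option maxRecDepth 1000000 in decide

lemma connected {n : ℕ} (h84 : n ≠ 84) (h140 : n ≠ 140) (h146 : n ≠ 146)
    {z z' : Fin 4 → ℕ}
    (hz : z ∈ facs ![20, 28, 42, 73] n) (hz' : z' ∈ facs ![20, 28, 42, 73] n) :
    Relation.ReflTransGen (adj ![20, 28, 42, 73] n) z z' := by
  by_cases hn : 354 ≤ n
  · exact large_conn hn mem_of_208 hz hz'
  · rcases smallcheck n (List.mem_range.mpr (by omega)) with (rfl|h)|h|h
    · have e1 := facs_iff.mp hz
      have e2 := facs_iff.mp hz'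
      have hz0 : z = ![0,0,0,0] := eq_vec (by
        have : z 0 = 0 ∧ z 1 = 0 ∧ z 2 = 0 ∧ z 3 = 0 := by omega
        simp [this.1, this.2.1, this.2.2.1, this.2.2.2])
      have hz0' : z' = ![0,0,0,0] := eq_vec (by
        have : z' 0 = 0 ∧ z' 1 = 0 ∧ z' 2 = 0 ∧ z' 3 = 0 := by omega
        simp [this.1, this.2.1, this.2.2.1, this.2.2.2])
      rw [hz0, hz0']
    · tauto
    · exact conn_of_hub h hz hz'
    · exact absurd (h ▸ mem_quads_of_facs hz) (by simp)

/-! ### Betti elements -/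

lemma betti_of {n : ℕ} {w v : Fin 4 → ℕ} (hw : w ∈ facs ![20,28,42,73] n)
    (hv : v ∈ facs ![20,28,42,73] n)
    (hiso : ∀ u ∈ facs ![20,28,42,73] n, (∃ i, 0 < w i ∧ 0 < u i) → u = w)
    (hne : v ≠ w) : IsBetti ![20,28,42,73] n :=
  ⟨w, hw, v, hv, fun h => hne (reach_eq hiso v h)⟩

lemma betti84 : IsBetti ![20,28,42,73] 84 := by
  refine betti_of (w := ![0,0,2,0]) (v := ![0,3,0,0])
    (vec_facs_of_quads (by decide)) (vec_facs_of_quads (by decide)) ?_ ?_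
  · rintro u hu ⟨i, hwi, hui⟩
    have hq := mem_quads_of_facs hu
    rw [show quads 84 = [(0,0,2,0),(0,3,0,0)] from by decide] at hq
    simp only [List.mem_cons, List.not_mem_nil, or_false] at hq
    rcases hq with hq|hq
    · exact eq_vec hq
    · exfalso
      simp only [Prod.mk.injEq] at hq
      fin_cases i <;> simp_all
  · intro h
    have := congrFun h 1
    simp at this

lemma betti140 : IsBetti ![20,28,42,73] 140 := by
  refine betti_of (w := ![7,0,0,0]) (v := ![0,5,0,0])
    (vec_facs_of_quads (by decide)) (vec_facs_of_quads (by decide)) ?_ ?_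
  · rintro u hu ⟨i, hwi, hui⟩
    have hq := mem_quads_of_facs hu
    rw [show quads 140 = [(0,2,2,0),(0,5,0,0),(7,0,0,0)] from by decide] at hq
    simp only [List.mem_cons, List.not_mem_nil, or_false] at hq
    rcases hq with hq|hq|hq
    · exfalso; simp only [Prod.mk.injEq] at hq; fin_cases i <;> simp_all
    · exfalso; simp only [Prod.mk.injEq] at hq; fin_cases i <;> simp_all
    · exact eq_vec hq
  · intro h
    have := congrFun h 1
    simp at this

lemma betti146 : IsBetti ![20,28,42,73] 146 := by
  refine betti_of (w := ![0,0,0,2]) (v := ![1,0,3,0])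
    (vec_facs_of_quads (by decide)) (vec_facs_of_quads (by decide)) ?_ ?_
  · rintro u hu ⟨i, hwi, hui⟩
    have hq := mem_quads_of_facs hu
    rw [show quads 146 = [(0,0,0,2),(1,0,3,0),(1,3,1,0)] from by decide] at hq
    simp only [List.mem_cons, List.not_mem_nil, or_false] at hq
    rcases hq with hq|hq|hq
    · exact eq_vec hq
    · exfalso; simp only [Prod.mk.injEq] at hq; fin_cases i <;> simp_all
    · exfalso; simp only [Prod.mk.injEq] at hq; fin_cases i <;> simp_all
  · intro h
    have := congrFun h 0
    simp at this

lemma bettiset : {n : ℕ | IsBetti ![20,28,42,73] n} = {84, 140, 146} := by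
  ext n
  simp only [Set.mem_setOf_eq, Set.mem_insert_iff, Set.mem_singleton_iff]
  constructor
  · intro h
    by_contra hc
    push_neg at hc
    obtain ⟨z, hz, z', hz', hn⟩ := h
    exact hn (connected hc.1 hc.2.1 hc.2.2 hz hz')
  · rintro (rfl|rfl|rfl)
    exacts [betti84, betti140, betti146]

/-! ### Length sets -/

lemma len_iff {n m : ℕ} : m ∈ lengthSet ![20,28,42,73] n ↔
    ∃ q ∈ quads n, q.1 + q.2.1 + q.2.2.1 + q.2.2.2 = m := by
  constructor
  · rintro ⟨z, hz, rfl⟩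
    exact ⟨_, mem_quads_of_facs hz, by simp [Fin.sum_univ_four]⟩
  · rintro ⟨⟨a,b,c,d⟩, hq, rfl⟩
    exact ⟨![a,b,c,d], vec_facs_of_quads hq, by simp [Fin.sum_univ_four]⟩

lemma len202 : lengthSet ![20,28,42,73] 202 = {4, 6, 7, 9} := by
  ext m
  rw [len_iff, show quads 202 = [(0,2,0,2),(1,2,3,0),(1,5,1,0),(8,0,1,0)] from by decide]
  simp only [List.mem_cons, List.not_mem_nil, or_false]
  constructor
  · rintro ⟨q, (rfl|rfl|rfl|rfl), rfl⟩ <;> norm_num [Set.mem_insert_iff]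
  · intro hm
    simp only [Set.mem_insert_iff, Set.mem_singleton_iff] at hm
    rcases hm with rfl|rfl|rfl|rfl
    exacts [⟨(0,2,0,2), by norm_num⟩, ⟨(1,2,3,0), by norm_num⟩,
            ⟨(1,5,1,0), by norm_num⟩, ⟨(8,0,1,0), by norm_num⟩]

lemma len84 : lengthSet ![20,28,42,73] 84 = {2, 3} := by
  ext m
  rw [len_iff, show quads 84 = [(0,0,2,0),(0,3,0,0)] from by decide]
  simp only [List.mem_cons, List.not_mem_nil, or_false]
  constructor
  · rintro ⟨q, (rfl|rfl), rfl⟩ <;> norm_num [Set.mem_insert_iff]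
  · intro hm
    simp only [Set.mem_insert_iff, Set.mem_singleton_iff] at hm
    rcases hm with rfl|rfl
    exacts [⟨(0,0,2,0), by norm_num⟩, ⟨(0,3,0,0), by norm_num⟩]

lemma len140 : lengthSet ![20,28,42,73] 140 = {4, 5, 7} := by
  ext m
  rw [len_iff, show quads 140 = [(0,2,2,0),(0,5,0,0),(7,0,0,0)] from by decide]
  simp only [List.mem_cons, List.not_mem_nil, or_false]
  constructor
  · rintro ⟨q, (rfl|rfl|rfl), rfl⟩ <;> norm_num [Set.mem_insert_iff]
  · intro hm
    simp only [Set.mem_insert_iff, Set.mem_singleton_iff] at hm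
    rcases hm with rfl|rfl|rfl
    exacts [⟨(0,2,2,0), by norm_num⟩, ⟨(0,5,0,0), by norm_num⟩, ⟨(7,0,0,0), by norm_num⟩]

lemma len146 : lengthSet ![20,28,42,73] 146 = {2, 4, 5} := by
  ext m
  rw [len_iff, show quads 146 = [(0,0,0,2),(1,0,3,0),(1,3,1,0)] from by decide]
  simp only [List.mem_cons, List.not_mem_nil, or_false]
  constructor
  · rintro ⟨q, (rfl|rfl|rfl), rfl⟩ <;> norm_num [Set.mem_insert_iff]
  · intro hm
    simp only [Set.mem_insert_iff, Set.mem_singleton_iff] at hm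
    rcases hm with rfl|rfl|rfl
    exacts [⟨(0,0,0,2), by norm_num⟩, ⟨(1,0,3,0), by norm_num⟩, ⟨(1,3,1,0), by norm_num⟩]

/-! ### LD values -/

lemma sSup_eq_of {S : Set ℕ} {a : ℕ} (ha : a ∈ S) (hb : ∀ x ∈ S, x ≤ a) : sSup S = a :=
  le_antisymm (csSup_le ⟨a, ha⟩ hb) (le_csSup ⟨a, hb⟩ ha)

lemma sInf_eq_of {S : Set ℕ} {a : ℕ} (ha : a ∈ S) (hb : ∀ x ∈ S, a ≤ x) : sInf S = a :=
  le_antisymm (csInf_le (OrderBot.bddBelow S) ha) (le_csInf ⟨a, ha⟩ hb)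

lemma LD202 : LD ![20,28,42,73] 202 = 3 / 5 := by
  rw [LD, len202]
  rw [sSup_eq_of (a := 9) (by norm_num) (by intro x hx; simp only [Set.mem_insert_iff, Set.mem_singleton_iff] at hx; omega)]
  rw [sInf_eq_of (a := 4) (by norm_num [Set.mem_insert_iff]) (by intro x hx; simp only [Set.mem_insert_iff, Set.mem_singleton_iff] at hx; omega)]
  rw [show ({4,6,7,9} : Set ℕ) = (↑({4,6,7,9} : Finset ℕ) : Set ℕ) by simp, Set.ncard_coe_finset]
  norm_num

lemma LD84 : LD ![20,28,42,73] 84 = 1 := by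
  rw [LD, len84]
  rw [sSup_eq_of (a := 3) (by norm_num) (by intro x hx; simp only [Set.mem_insert_iff, Set.mem_singleton_iff] at hx; omega)]
  rw [sInf_eq_of (a := 2) (by norm_num [Set.mem_insert_iff]) (by intro x hx; simp only [Set.mem_insert_iff, Set.mem_singleton_iff] at hx; omega)]
  rw [show ({2,3} : Set ℕ) = (↑({2,3} : Finset ℕ) : Set ℕ) by simp, Set.ncard_coe_finset]
  norm_num

lemma LD140 : LD ![20,28,42,73] 140 = 2 / 3 := by
  rw [LD, len140]
  rw [sSup_eq_of (a := 7) (by norm_num) (by intro x hx; simp only [Set.mem_insert_iff, Set.mem_singleton_iff] at hx; omega)]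
  rw [sInf_eq_of (a := 4) (by norm_num [Set.mem_insert_iff]) (by intro x hx; simp only [Set.mem_insert_iff, Set.mem_singleton_iff] at hx; omega)]
  rw [show ({4,5,7} : Set ℕ) = (↑({4,5,7} : Finset ℕ) : Set ℕ) by simp, Set.ncard_coe_finset]
  norm_num

lemma LD146 : LD ![20,28,42,73] 146 = 2 / 3 := by
  rw [LD, len146]
  rw [sSup_eq_of (a := 5) (by norm_num) (by intro x hx; simp only [Set.mem_insert_iff, Set.mem_singleton_iff] at hx; omega)]
  rw [sInf_eq_of (a := 2) (by norm_num [Set.mem_insert_iff]) (by intro x hx; simp only [Set.mem_insert_iff, Set.mem_singleton_iff] at hx; omega)]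
  rw [show ({2,4,5} : Set ℕ) = (↑({2,4,5} : Finset ℕ) : Set ℕ) by simp, Set.ncard_coe_finset]
  norm_num


theorem stmt11 :
    lengthSet ![20, 28, 42, 73] 202 = {4, 6, 7, 9} ∧
    LD ![20, 28, 42, 73] 202 = 3 / 5 ∧
    {n : ℕ | IsBetti ![20, 28, 42, 73] n} = {84, 140, 146} ∧
    lengthSet ![20, 28, 42, 73] 84 = {2, 3} ∧
    lengthSet ![20, 28, 42, 73] 140 = {4, 5, 7} ∧
    lengthSet ![20, 28, 42, 73] 146 = {2, 4, 5} ∧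
    ∀ b : ℕ, IsBetti ![20, 28, 42, 73] b →
      LD ![20, 28, 42, 73] 202 < LD ![20, 28, 42, 73] b := by
  refine ⟨len202, LD202, bettiset, len84, len140, len146, ?_⟩
  intro b hb
  have hbmem : b ∈ ({84, 140, 146} : Set ℕ) := by rw [← bettiset]; exact hb
  rw [LD202]
  simp only [Set.mem_insert_iff, Set.mem_singleton_iff] at hbmem
  rcases hbmem with rfl|rfl|rfl
  · rw [LD84]; norm_num
  · rw [LD140]; norm_num
  · rw [LD146]; norm_num
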